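/- Let F : ℝⁿ → Set ℝⁿ be upper semicontinuous with F(x) nonempty, compact, and convex for every x, let X_o, X_u ⊆ ℝⁿ, and let B : ℝⁿ → ℝ be a continuously differentiable barrier function candidate with respect to (X_o, X_u) with zero-sublevel set K and with ∇B(x) ≠ 0 for all x ∈ ∂K. Suppose there exist a continuous function λ₂ : ℝⁿ → [0,∞) and a continuous function λ₁ : ℝ → [0,∞) with λ₁(0) = 0 such that F(x + δ𝔹) ⊆ F(x) + λ₁(δ)λ₂(x)𝔹 for every x ∈ ∂K and every δ > 0. If inf { ⟨∇B(x), −η⟩ / ( |∇B(x)| (1 + λ₂(x)) ) : x ∈ ∂K, η ∈ F(x) } > 0, then the system ẋ ∈ F(x) is uniformly strongly robustly safe with respect to (X_o, X_u). -/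

import Mathlib

open Metric Set Filter MeasureTheory
open scoped Pointwise RealInnerProductSpace Topology

variable {E : Type*} [NormedAddCommGroup E] [NormedSpace ℝ E]

/-- Admissible solution domains: `[0,T]`, `[0,T)`, or `[0,∞)`. -/
def SolDomain (D : Set ℝ) : Prop :=
  (∃ T : ℝ, 0 ≤ T ∧ D = Set.Icc 0 T) ∨ (∃ T : ℝ, 0 < T ∧ D = Set.Ico 0 T) ∨ D = Set.Ici 0

/-- `φ` is a (locally absolutely continuous) solution of `ẋ ∈ F x` on `D`,
expressed in integral form: `φ t = φ 0 + ∫₀ᵗ v`, with `v t ∈ F (φ t)` a.e. on `D`. -/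
def IsSolutionOn (F : E → Set E) (φ : ℝ → E) (D : Set ℝ) : Prop :=
  SolDomain D ∧ ∃ v : ℝ → E,
    (∀ t ∈ D, MeasureTheory.IntegrableOn v (Set.Icc 0 t)) ∧
    (∀ t ∈ D, φ t = φ 0 + ∫ s in (0:ℝ)..t, v s) ∧
    (∀ᵐ t ∂(MeasureTheory.volume.restrict D), v t ∈ F (φ t))

/-- Safety: no solution starting in `Xo` ever reaches `Xu`. -/
def Safe (F : E → Set E) (Xo Xu : Set E) : Prop :=
  ∀ (φ : ℝ → E) (D : Set ℝ), IsSolutionOn F φ D → φ 0 ∈ Xo → ∀ t ∈ D, φ t ∉ Xu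

/-- Forward invariance of `K`. -/
def ForwardInvariant (F : E → Set E) (K : Set E) : Prop :=
  ∀ (φ : ℝ → E) (D : Set ℝ), IsSolutionOn F φ D → φ 0 ∈ K → ∀ t ∈ D, φ t ∈ K

/-- Image of a set under a set-valued map: `F(S) = ⋃_{y ∈ S} F(y)`. -/
def svImage (F : E → Set E) (S : Set E) : Set E := ⋃ y ∈ S, F y

/-- Right-hand side of the strongly perturbed system `Σ^s_ε`:
`conv (F (x + ε(x)𝔹)) + ε(x)𝔹`. -/
def strongPert (F : E → Set E) (ε : E → ℝ) (x : E) : Set E :=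
  convexHull ℝ (svImage F (Metric.closedBall x (ε x))) + Metric.closedBall (0:E) (ε x)

/-- Right-hand side of the (ordinary) perturbed system `Σ_ε`: `F x + ε(x)𝔹`. -/
def pert (F : E → Set E) (ε : E → ℝ) (x : E) : Set E :=
  F x + Metric.closedBall (0:E) (ε x)

def RobustlySafe (F : E → Set E) (Xo Xu : Set E) : Prop :=
  ∃ ε : E → ℝ, Continuous ε ∧ (∀ x, 0 < ε x) ∧ Safe (pert F ε) Xo Xu

def StronglyRobustlySafe (F : E → Set E) (Xo Xu : Set E) : Prop :=
  ∃ ε : E → ℝ, Continuous ε ∧ (∀ x, 0 < ε x) ∧ Safe (strongPert F ε) Xo Xu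

def UniformlyStronglyRobustlySafe (F : E → Set E) (Xo Xu : Set E) : Prop :=
  ∃ ε : ℝ, 0 < ε ∧ Safe (strongPert F (fun _ => ε)) Xo Xu

/-- Upper semicontinuity of a set-valued map. -/
def UpperSemicontinuousSV (F : E → Set E) : Prop :=
  ∀ x : E, ∀ U : Set E, IsOpen U → F x ⊆ U → ∀ᶠ y in nhds x, F y ⊆ U

/-- Lower semicontinuity of a set-valued map (sequential form). -/
def LowerSemicontinuousSV (F : E → Set E) : Prop :=
  ∀ x : E, ∀ y ∈ F x, ∀ u : ℕ → E, Filter.Tendsto u Filter.atTop (nhds x) →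
    ∃ v : ℕ → E, (∀ i, v i ∈ F (u i)) ∧ Filter.Tendsto v Filter.atTop (nhds y)

/-- Under the modulus-of-continuity assumption
`F(x + δ𝔹) ⊆ F(x) + λ₁(δ)λ₂(x)𝔹` on `∂K`, if
`inf { ⟨∇B x, -η⟩ / (|∇B x| (1 + λ₂ x)) : x ∈ ∂K, η ∈ F x } > 0`,
then `ẋ ∈ F x` is uniformly strongly robustly safe. -/
theorem stmt7 {n : ℕ} (F : EuclideanSpace ℝ (Fin n) → Set (EuclideanSpace ℝ (Fin n)))
    (hFusc : UpperSemicontinuousSV F)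
    (hFne : ∀ x, (F x).Nonempty) (hFcpt : ∀ x, IsCompact (F x)) (hFcvx : ∀ x, Convex ℝ (F x))
    (Xo Xu : Set (EuclideanSpace ℝ (Fin n))) (B : EuclideanSpace ℝ (Fin n) → ℝ)
    (hB : ContDiff ℝ 1 B) (hBu : ∀ x ∈ Xu, 0 < B x) (hBo : ∀ x ∈ Xo, B x ≤ 0)
    (hgradne : ∀ x ∈ frontier {y | B y ≤ 0}, gradient B x ≠ 0)
    (lam1 : ℝ → ℝ) (hlam1c : Continuous lam1) (hlam1nn : ∀ δ, 0 ≤ lam1 δ) (hlam10 : lam1 0 = 0)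
    (lam2 : EuclideanSpace ℝ (Fin n) → ℝ) (hlam2c : Continuous lam2) (hlam2nn : ∀ x, 0 ≤ lam2 x)
    (hmod : ∀ x ∈ frontier {y | B y ≤ 0}, ∀ δ > (0:ℝ),
      svImage F (Metric.closedBall x δ) ⊆ F x + Metric.closedBall 0 (lam1 δ * lam2 x))
    (hinf : ∃ σ > (0:ℝ), ∀ x ∈ frontier {y | B y ≤ 0}, ∀ η ∈ F x,
      σ ≤ ⟪gradient B x, -η⟫ / (‖gradient B x‖ * (1 + lam2 x))) :
    UniformlyStronglyRobustlySafe F Xo Xu := by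
    classical
  obtain ⟨σ, hσ, hσle⟩ := hinf
  -- choose a uniform ε
  have h14 : (0:ℝ) < σ/4 := by linarith
  have hev : ∀ᶠ δ in 𝓝 (0:ℝ), lam1 δ < σ/4 := by
    have h := hlam1c.tendsto 0
    rw [hlam10] at h
    exact h (Iio_mem_nhds h14)
  obtain ⟨ε₀, hε₀pos, hε₀p⟩ := Metric.eventually_nhds_iff.1 hev
  obtain ⟨eps, hepspos, heps1, heps2⟩ : ∃ e : ℝ, 0 < e ∧ e ≤ ε₀/3 ∧ e ≤ σ/2 :=
    ⟨min (ε₀/3) (σ/2), lt_min (by linarith) (by linarith), min_le_left _ _, min_le_right _ _⟩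
  refine ⟨eps, hepspos, ?_⟩
  intro φ D hsol h0 t ht htu
  obtain ⟨hdom, v, hint, heq, hae⟩ := hsol
  have hBt : 0 < B (φ t) := hBu _ htu
  have hB0 : B (φ 0) ≤ 0 := hBo _ h0
  have hsub' : Icc 0 t ⊆ D ∧ 0 ≤ t := by
    rcases hdom with ⟨T, hT, rfl⟩ | ⟨T, hT, rfl⟩ | rfl
    · exact ⟨Icc_subset_Icc le_rfl ht.2, ht.1⟩
    · exact ⟨fun u hu => ⟨hu.1, lt_of_le_of_lt hu.2 ht.2⟩, ht.1⟩
    · exact ⟨fun u hu => hu.1, ht⟩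
  obtain ⟨hsub, ht0⟩ := hsub'
  -- continuity of φ on [0,t]
  have hφcont : ContinuousOn φ (Icc 0 t) := by
    have h1 : ContinuousOn (fun u => φ 0 + ∫ s in Ioc 0 u, v s) (Icc 0 t) :=
      continuousOn_const.add (intervalIntegral.continuousOn_primitive (hint t ht))
    refine h1.congr fun u hu => ?_
    rw [heq u (hsub hu), intervalIntegral.integral_of_le hu.1]
  have hBφ : ContinuousOn (fun u => B (φ u)) (Icc 0 t) := hB.continuous.comp_continuousOn hφcont
  -- the last exit time s
  set S : Set ℝ := Icc 0 t ∩ (fun u => B (φ u)) ⁻¹' Iic 0 with hSdef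
  have hScl : IsClosed S := hBφ.preimage_isClosed_of_isClosed isClosed_Icc isClosed_Iic
  have hS0 : (0:ℝ) ∈ S := ⟨⟨le_rfl, ht0⟩, hB0⟩
  have hbdd : BddAbove S := ⟨t, fun u hu => hu.1.2⟩
  obtain ⟨s, hsS, hsup⟩ : ∃ s, s ∈ S ∧ ∀ u ∈ S, u ≤ s :=
    ⟨sSup S, hScl.csSup_mem ⟨0, hS0⟩ hbdd, fun u hu => le_csSup hbdd hu⟩
  have hs0 : 0 ≤ s := hsS.1.1
  have hst : s ≤ t := hsS.1.2
  have hBs_le : B (φ s) ≤ 0 := hsS.2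
  have hslt : s < t := hst.lt_of_ne (by intro hE; rw [hE] at hBs_le; exact absurd hBt (not_lt.2 hBs_le))
  have hgt : ∀ u, s < u → u ≤ t → 0 < B (φ u) := by
    intro u h1 h2
    by_contra hcon
    push_neg at hcon
    exact absurd (hsup u ⟨⟨hs0.trans h1.le, h2⟩, hcon⟩) (not_le.2 h1)
  have hne : (𝓝[Ioc s t] s).NeBot := left_nhdsWithin_Ioc_neBot hslt
  have hmono : Ioc s t ⊆ Icc 0 t := fun u hu => ⟨hs0.trans hu.1.le, hu.2⟩
  have hφtends : Tendsto φ (𝓝[Ioc s t] s) (𝓝 (φ s)) :=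
    (hφcont s ⟨hs0, hst⟩).tendsto.mono_left (nhdsWithin_mono s hmono)
  have htends : Tendsto (fun u => B (φ u)) (𝓝[Ioc s t] s) (𝓝 (B (φ s))) :=
    ((hBφ s ⟨hs0, hst⟩).tendsto).mono_left (nhdsWithin_mono s hmono)
  have hBs : B (φ s) = 0 := by
    refine le_antisymm hBs_le (ge_of_tendsto htends ?_)
    exact eventually_mem_nhdsWithin.mono fun u hu => (hgt u hu.1 hu.2).le
  -- φ s is on the frontier of K
  have hKcl : IsClosed {y : EuclideanSpace ℝ (Fin n) | B y ≤ 0} :=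
    isClosed_le hB.continuous continuous_const
  have hxfr : φ s ∈ frontier {y | B y ≤ 0} := by
    rw [hKcl.frontier_eq]
    refine ⟨hBs_le, fun hintr => ?_⟩
    have hmem : {y : EuclideanSpace ℝ (Fin n) | B y ≤ 0} ∈ 𝓝 (φ s) :=
      mem_interior_iff_mem_nhds.1 hintr
    have h1 : ∀ᶠ u in 𝓝[Ioc s t] s, φ u ∈ {y | B y ≤ 0} := hφtends hmem
    obtain ⟨u, hu1, hu2⟩ := (h1.and eventually_mem_nhdsWithin).exists
    exact absurd (hgt u hu2.1 hu2.2) (not_lt.2 hu1)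
  obtain ⟨G, hG⟩ : ∃ G, gradient B (φ s) = G := ⟨_, rfl⟩
  have hGne : G ≠ 0 := hG ▸ hgradne _ hxfr
  have hGpos : 0 < ‖G‖ := norm_pos_iff.2 hGne
  have hgradc : Continuous (gradient B) := by
    have h1 : Continuous (fderiv ℝ B) := hB.continuous_fderiv one_ne_zero
    exact (InnerProductSpace.toDual ℝ (EuclideanSpace ℝ (Fin n))).symm.continuous.comp h1
  obtain ⟨M₀, hM₀⟩ := (hFcpt (φ s)).isBounded.subset_closedBall 0
  have hM₀0 : 0 ≤ M₀ := by
    obtain ⟨η, hη⟩ := hFne (φ s)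
    exact (norm_nonneg η).trans (mem_closedBall_zero_iff.1 (hM₀ hη))
  obtain ⟨lx, hlxdef⟩ : ∃ lx, lam2 (φ s) = lx := ⟨_, rfl⟩
  have hlx : 0 ≤ lx := hlxdef ▸ hlam2nn _
  obtain ⟨M, hM⟩ : ∃ M : ℝ, M₀ + σ/4 * lx + eps = M := ⟨_, rfl⟩
  have hMpos : 0 < M := by
    have h9 : 0 ≤ σ/4 * lx := by positivity
    linarith [hM]
  have hρpos : (0:ℝ) < σ/2*‖G‖/M := by positivity
  have hev2 : ∀ᶠ z in 𝓝 (φ s), dist (gradient B z) G < σ/2*‖G‖/M := by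
    have h := Metric.tendsto_nhds.1 (hgradc.tendsto (φ s)) (σ/2*‖G‖/M) hρpos
    simpa only [hG] using h
  obtain ⟨r₁, hr₁pos, hr₁p⟩ := Metric.eventually_nhds_iff.1 hev2
  obtain ⟨r, hrpos, hrε, hr12⟩ : ∃ r : ℝ, 0 < r ∧ r ≤ eps ∧ r ≤ r₁/2 :=
    ⟨min eps (r₁/2), lt_min hepspos (by linarith), min_le_left _ _, min_le_right _ _⟩
  have hgrad_close : ∀ z ∈ closedBall (φ s) r, dist (gradient B z) G < σ/2*‖G‖/M := by
    intro z hz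
    refine hr₁p ?_
    have h1 : dist z (φ s) ≤ r := mem_closedBall.1 hz
    linarith
  have hlam1small : lam1 (eps + r) ≤ σ/4 := by
    have hd0 : dist (eps + r) 0 < ε₀ := by
      rw [Real.dist_0_eq_abs, abs_of_nonneg (by linarith)]
      linarith
    exact (hε₀p hd0).le
  -- inner product bound on F (φ s)
  have hFxbound : ∀ η ∈ F (φ s), ⟪G, η⟫ ≤ -(σ * (‖G‖ * (1 + lx))) := by
    intro η hη
    have hP : 0 < ‖G‖ * (1 + lx) := mul_pos hGpos (by linarith)
    have h := hσle (φ s) hxfr η hη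
    rw [hG, hlxdef] at h
    rw [le_div_iff₀ hP, inner_neg_right] at h
    linarith
  have hlin : IsLinearMap ℝ (fun w : EuclideanSpace ℝ (Fin n) => ⟪G, w⟫) :=
    ⟨fun a b => inner_add_right _ _ _, fun c a => real_inner_smul_right _ _ _⟩
  obtain ⟨C₁, hC₁⟩ : ∃ C : ℝ, σ/4 * lx * ‖G‖ - σ * (‖G‖ * (1 + lx)) = C := ⟨_, rfl⟩
  have hconvsub : ∀ y ∈ closedBall (φ s) r,
      convexHull ℝ (svImage F (closedBall y eps)) ⊆
        {w : EuclideanSpace ℝ (Fin n) | ⟪G, w⟫ ≤ C₁} ∩ closedBall 0 (M₀ + σ/4 * lx) := by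
    intro y hy
    refine convexHull_min ?_ ((convex_halfSpace_le hlin C₁).inter (convex_closedBall _ _))
    have h1 : closedBall y eps ⊆ closedBall (φ s) (eps + r) :=
      closedBall_subset_closedBall' (by
        have := mem_closedBall.1 hy; linarith)
    have hsv : svImage F (closedBall y eps) ⊆ svImage F (closedBall (φ s) (eps + r)) := by
      intro w hw
      obtain ⟨y', hy', hw'⟩ := mem_iUnion₂.1 hw
      exact mem_iUnion₂.2 ⟨y', h1 hy', hw'⟩
    have h2 : svImage F (closedBall y eps) ⊆
        F (φ s) + closedBall 0 (lam1 (eps + r) * lx) :=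
      hsv.trans (by rw [← hlxdef]; exact hmod (φ s) hxfr (eps + r) (by linarith))
    intro w hw
    obtain ⟨η, hη, b, hb, rfl⟩ := Set.mem_add.1 (h2 hw)
    have hbnorm : ‖b‖ ≤ lam1 (eps + r) * lx := mem_closedBall_zero_iff.1 hb
    have hlam1lx : lam1 (eps + r) * lx ≤ σ/4 * lx := mul_le_mul_of_nonneg_right hlam1small hlx
    constructor
    · have hGb : ⟪G, b⟫ ≤ ‖G‖ * (σ/4 * lx) := by
        refine (real_inner_le_norm G b).trans ?_
        exact mul_le_mul_of_nonneg_left (hbnorm.trans hlam1lx) (norm_nonneg G)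
      have hGη := hFxbound η hη
      have hcomm : ‖G‖ * (σ/4 * lx) = σ/4 * lx * ‖G‖ := by ring
      simp only [Set.mem_setOf_eq, inner_add_right]
      linarith [hC₁]
    · rw [mem_closedBall_zero_iff]
      have hηn : ‖η‖ ≤ M₀ := mem_closedBall_zero_iff.1 (hM₀ hη)
      calc ‖η + b‖ ≤ ‖η‖ + ‖b‖ := norm_add_le _ _
        _ ≤ M₀ + σ/4 * lx := by linarith
  -- key derivative-sign lemma
  have hkey : ∀ z ∈ closedBall (φ s) r, ∀ y ∈ closedBall (φ s) r,
      ∀ w ∈ strongPert F (fun _ => eps) y, ⟪gradient B z, w⟫ ≤ 0 := by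
    intro z hz y hy w hw
    obtain ⟨w₁, hw₁, b₂, hb₂, rfl⟩ := Set.mem_add.1 hw
    have h₁ := hconvsub y hy hw₁
    have hw₁inner : ⟪G, w₁⟫ ≤ C₁ := h₁.1
    have hw₁norm : ‖w₁‖ ≤ M₀ + σ/4 * lx := mem_closedBall_zero_iff.1 h₁.2
    have hb₂norm : ‖b₂‖ ≤ eps := mem_closedBall_zero_iff.1 hb₂
    have hwnorm : ‖w₁ + b₂‖ ≤ M := (norm_add_le _ _).trans (by linarith [hM])
    have hGw : ⟪G, w₁ + b₂⟫ ≤ -(σ/2*‖G‖) := by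
      have h2 : ⟪G, b₂⟫ ≤ ‖G‖ * (σ/2) := by
        refine (real_inner_le_norm G b₂).trans ?_
        exact mul_le_mul_of_nonneg_left (hb₂norm.trans heps2) (norm_nonneg G)
      rw [inner_add_right]
      have hkey0 : 0 ≤ σ * lx * ‖G‖ := by positivity
      nlinarith [hGpos.le, hC₁, hw₁inner]
    have heqn : ⟪gradient B z, w₁ + b₂⟫ = ⟪G, w₁ + b₂⟫ + ⟪gradient B z - G, w₁ + b₂⟫ := by
      rw [inner_sub_left]; ring
    have h3 : ⟪gradient B z - G, w₁ + b₂⟫ ≤ ‖gradient B z - G‖ * ‖w₁ + b₂‖ :=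
      real_inner_le_norm _ _
    have h4 : ‖gradient B z - G‖ ≤ σ/2*‖G‖/M := by
      have := hgrad_close z hz
      rw [dist_eq_norm] at this
      exact this.le
    have h5 : ‖gradient B z - G‖ * ‖w₁ + b₂‖ ≤ (σ/2*‖G‖/M) * M :=
      mul_le_mul h4 hwnorm (norm_nonneg _) hρpos.le
    have h6 : (σ/2*‖G‖/M) * M = σ/2*‖G‖ := div_mul_cancel₀ _ (ne_of_gt hMpos)
    linarith
  -- pick a small time u > s staying in the ball
  obtain ⟨δ, hδpos, hδ⟩ := Metric.tendsto_nhdsWithin_nhds.1 (hφcont s ⟨hs0, hst⟩) r hrpos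
  obtain ⟨u, hsu, hut, huδ⟩ : ∃ u, s < u ∧ u ≤ t ∧ u ≤ s + δ/2 :=
    ⟨min t (s + δ/2), lt_min hslt (by linarith), min_le_left _ _, min_le_right _ _⟩
  have hu0 : 0 ≤ u := hs0.trans hsu.le
  have huD : u ∈ D := hsub ⟨hu0, hut⟩
  have hsD : s ∈ D := hsub ⟨hs0, hst⟩
  have hball : ∀ w ∈ Icc s u, φ w ∈ closedBall (φ s) r := by
    intro w hw
    have hw1 : w ∈ Icc 0 t := ⟨hs0.trans hw.1, hw.2.trans hut⟩
    have hwu : w ≤ s + δ/2 := hw.2.trans huδ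
    have hdw : dist w s < δ := by
      rw [Real.dist_eq, abs_of_nonneg (by linarith [hw.1])]
      linarith
    exact mem_closedBall.2 (hδ hw1 hdw).le
  have hBupos : 0 < B (φ u) := hgt u hsu hut
  -- interval integrability
  have hii0u : IntervalIntegrable v volume 0 u :=
    IntegrableOn.intervalIntegrable (by rw [uIcc_of_le hu0]; exact hint u huD)
  have hii0s : IntervalIntegrable v volume 0 s :=
    IntegrableOn.intervalIntegrable (by rw [uIcc_of_le hs0]; exact hint s hsD)
  have hiisu : IntervalIntegrable v volume s u :=
    IntegrableOn.intervalIntegrable (by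
      rw [uIcc_of_le hsu.le]
      exact (hint u huD).mono_set (Icc_subset_Icc hs0 le_rfl))
  obtain ⟨d, hd⟩ : ∃ d : EuclideanSpace ℝ (Fin n), φ u - φ s = d := ⟨_, rfl⟩
  have hdint : d = ∫ r' in s..u, v r' := by
    rw [← hd, heq u huD, heq s hsD, add_sub_add_left_eq_sub,
      intervalIntegral.integral_interval_sub_left hii0u hii0s]
  have hdnorm : ‖d‖ ≤ r := by
    have := mem_closedBall.1 (hball u ⟨hsu.le, le_rfl⟩)
    rwa [dist_eq_norm, hd] at this
  obtain ⟨γ, hγ⟩ : ∃ γ : ℝ → EuclideanSpace ℝ (Fin n), (fun θ => φ s + θ • d) = γ := ⟨_, rfl⟩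
  have hγball : ∀ θ ∈ Icc (0:ℝ) 1, γ θ ∈ closedBall (φ s) r := by
    intro θ hθ
    rw [mem_closedBall, dist_eq_norm, ← hγ]
    have he : φ s + θ • d - φ s = θ • d := by abel
    rw [he, norm_smul]
    have h1 : ‖θ‖ ≤ 1 := by
      rw [Real.norm_eq_abs, abs_of_nonneg hθ.1]; exact hθ.2
    calc ‖θ‖ * ‖d‖ ≤ 1 * ‖d‖ := mul_le_mul_of_nonneg_right h1 (norm_nonneg d)
      _ = ‖d‖ := one_mul _
      _ ≤ r := hdnorm
  have hderiv : ∀ θ ∈ uIcc (0:ℝ) 1,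
      HasDerivAt (fun θ => B (γ θ)) (⟪gradient B (γ θ), d⟫) θ := by
    intro θ _
    have h1 : HasDerivAt γ d θ := by
      rw [← hγ]
      have h0 : HasDerivAt (fun y : ℝ => y • d) ((1:ℝ) • d) θ := (hasDerivAt_id θ).smul_const d
      simpa using h0.const_add (φ s)
    have h2 : HasFDerivAt B (fderiv ℝ B (γ θ)) (γ θ) :=
      (hB.differentiable one_ne_zero (γ θ)).hasFDerivAt
    have h3 := h2.comp_hasDerivAt θ h1
    rw [gradient, InnerProductSpace.toDual_symm_apply]
    exact h3
  have hcontint : IntervalIntegrable (fun θ => ⟪gradient B (γ θ), d⟫) volume 0 1 := by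
    refine Continuous.intervalIntegrable ?_ 0 1
    rw [← hγ]
    exact (hgradc.comp (continuous_const.add (continuous_id.smul continuous_const))).inner
      continuous_const
  have hftc : ∫ θ in (0:ℝ)..1, ⟪gradient B (γ θ), d⟫ = B (γ 1) - B (γ 0) :=
    intervalIntegral.integral_eq_sub_of_hasDerivAt hderiv hcontint
  have hγ1 : γ 1 = φ u := by rw [← hγ]; simp [← hd]
  have hγ0 : γ 0 = φ s := by rw [← hγ]; simp
  have hnonpos : ∀ θ ∈ Icc (0:ℝ) 1, ⟪gradient B (γ θ), d⟫ ≤ 0 := by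
    intro θ hθ
    have hvI : Integrable v (volume.restrict (Ioc s u)) := hiisu.1
    have hinner_eq : ⟪gradient B (γ θ), d⟫ = ∫ r' in Ioc s u, ⟪gradient B (γ θ), v r'⟫ := by
      rw [hdint, intervalIntegral.integral_of_le hsu.le]
      exact (integral_inner hvI _).symm
    rw [hinner_eq]
    refine integral_nonpos_of_ae ?_
    have hIocD : Ioc s u ⊆ D := fun r' hr' => hsub ⟨hs0.trans hr'.1.le, hr'.2.trans hut⟩
    have hae' : ∀ᵐ r' ∂(volume.restrict (Ioc s u)),
        v r' ∈ strongPert F (fun _ => eps) (φ r') :=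
      ae_mono (Measure.restrict_mono hIocD le_rfl) hae
    have hmem : ∀ᵐ r' ∂(volume.restrict (Ioc s u)), r' ∈ Ioc s u :=
      ae_restrict_mem measurableSet_Ioc
    filter_upwards [hae', hmem] with r' h1 h2
    exact hkey (γ θ) (hγball θ hθ) (φ r') (hball r' ⟨h2.1.le, h2.2⟩) (v r') h1
  have hint_le : ∫ θ in (0:ℝ)..1, ⟪gradient B (γ θ), d⟫ ≤ 0 := by
    rw [intervalIntegral.integral_of_le zero_le_one]
    refine integral_nonpos_of_ae ?_
    filter_upwards [ae_restrict_mem measurableSet_Ioc] with θ hθ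
    exact hnonpos θ ⟨hθ.1.le, hθ.2⟩
  rw [hftc, hγ1, hγ0, hBs] at hint_le
  linarith
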